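/- Let X and Y be topological spaces, (J_n)_{n∈ℕ} a sequence of functions from X × Y to [0,+∞], J_∞ : X × Y → [0,+∞], (E_n)_{n∈ℕ} a sequence of subsets of X × Y, and E_∞ ⊆ X × Y. Assume that for every (x,y) ∈ X × Y: (A) the infimum over all sequences xⁿ → x of ( the supremum over all sequences yⁿ → y of limsup_{n→∞} J_n(xⁿ,yⁿ) ) and the infimum over all sequences xⁿ → x of ( the infimum over all sequences yⁿ → y of liminf_{n→∞} J_n(xⁿ,yⁿ) ) both equal J_∞(x,y); (B) the supremum over all sequences xⁿ → x of ( the infimum over all sequences yⁿ → y of limsup_{n→∞} 1_{E_n}(xⁿ,yⁿ) ) and the infimum over all sequences xⁿ → x of ( the infimum over all sequences yⁿ → y of liminf_{n→∞} 1_{E_n}(xⁿ,yⁿ) ) both equal 1_{E_∞}(x,y). Then J_n + 1_{E_n} sequentially Γ-converges to J_∞ + 1_{E_∞} on the product space: for every (x,y) ∈ X × Y, the infimum over all sequences (xⁿ,yⁿ) → (x,y) in X × Y of liminf_{n→∞} (J_n + 1_{E_n})(xⁿ,yⁿ) and the infimum over all such sequences of limsup_{n→∞} (J_n + 1_{E_n})(xⁿ,yⁿ)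 both equal J_∞(x,y) + 1_{E_∞}(x,y). -/
import Mathlib


open Filter Topology
open scoped ENNReal

open Classical in
/-- The `[0, +∞]`-valued indicator of a set: `0` on the set and `+∞` off it. -/
noncomputable def eIndicator {Z : Type*} (E : Set Z) (z : Z) : ℝ≥0∞ :=
  if z ∈ E then 0 else ⊤

/-- Γ-convergence of `J n + 1_{E n}` on the product space.
If the mixed sequential Γ-limits of `J n` equal `J∞` and those of the indicators
`1_{E n}` equal `1_{E∞}` (in the stated senses), then `J n + 1_{E n}` sequentially
Γ-converges to `J∞ + 1_{E∞}` on `X × Y` with the product topology, for both the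
`liminf` and the `limsup` variants. -/
theorem gammaSeq_add_indicator {X Y : Type*} [TopologicalSpace X] [TopologicalSpace Y]
    (J : ℕ → X × Y → ℝ≥0∞) (Jinf : X × Y → ℝ≥0∞)
    (E : ℕ → Set (X × Y)) (Einf : Set (X × Y))
    (hA1 : ∀ (x : X) (y : Y),
      (⨅ (u : ℕ → X) (_ : Tendsto u atTop (𝓝 x)),
        ⨆ (v : ℕ → Y) (_ : Tendsto v atTop (𝓝 y)),
          limsup (fun n => J n (u n, v n)) atTop) = Jinf (x, y))
    (hA2 : ∀ (x : X) (y : Y),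
      (⨅ (u : ℕ → X) (_ : Tendsto u atTop (𝓝 x)),
        ⨅ (v : ℕ → Y) (_ : Tendsto v atTop (𝓝 y)),
          liminf (fun n => J n (u n, v n)) atTop) = Jinf (x, y))
    (hB1 : ∀ (x : X) (y : Y),
      (⨆ (u : ℕ → X) (_ : Tendsto u atTop (𝓝 x)),
        ⨅ (v : ℕ → Y) (_ : Tendsto v atTop (𝓝 y)),
          limsup (fun n => eIndicator (E n) (u n, v n)) atTop) = eIndicator Einf (x, y))
    (hB2 : ∀ (x : X) (y : Y),
      (⨅ (u : ℕ → X) (_ : Tendsto u atTop (𝓝 x)),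
        ⨅ (v : ℕ → Y) (_ : Tendsto v atTop (𝓝 y)),
          liminf (fun n => eIndicator (E n) (u n, v n)) atTop) = eIndicator Einf (x, y)) :
    ∀ (x : X) (y : Y),
      ((⨅ (w : ℕ → X × Y) (_ : Tendsto w atTop (𝓝 (x, y))),
          liminf (fun n => J n (w n) + eIndicator (E n) (w n)) atTop)
        = Jinf (x, y) + eIndicator Einf (x, y)) ∧
      ((⨅ (w : ℕ → X × Y) (_ : Tendsto w atTop (𝓝 (x, y))),
          limsup (fun n => J n (w n) + eIndicator (E n) (w n)) atTop)
        = Jinf (x, y) + eIndicator Einf (x, y)) := by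
  intro x y
  -- Lower bound: along any sequence `w → (x, y)`.
  have LB : ∀ w : ℕ → X × Y, Tendsto w atTop (𝓝 (x, y)) →
      Jinf (x, y) + eIndicator Einf (x, y) ≤
        liminf (fun n => J n (w n) + eIndicator (E n) (w n)) atTop := by
    intro w hw
    have hu : Tendsto (fun n => (w n).1) atTop (𝓝 x) :=
      (continuous_fst.continuousAt.tendsto).comp hw
    have hv : Tendsto (fun n => (w n).2) atTop (𝓝 y) :=
      (continuous_snd.continuousAt.tendsto).comp hw
    have hJ : Jinf (x, y) ≤ liminf (fun n => J n (w n)) atTop := by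
      rw [← hA2 x y]
      refine iInf_le_of_le (fun n => (w n).1) (iInf_le_of_le hu
        (iInf_le_of_le (fun n => (w n).2) (iInf_le_of_le hv (le_of_eq ?_))))
      simp
    have hI : eIndicator Einf (x, y) ≤
        liminf (fun n => eIndicator (E n) (w n)) atTop := by
      rw [← hB2 x y]
      refine iInf_le_of_le (fun n => (w n).1) (iInf_le_of_le hu
        (iInf_le_of_le (fun n => (w n).2) (iInf_le_of_le hv (le_of_eq ?_))))
      simp
    by_cases hmem : (x, y) ∈ Einf
    · have h0 : eIndicator Einf (x, y) = 0 := by simp [eIndicator, hmem]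
      rw [h0, add_zero]
      exact hJ.trans (liminf_le_liminf (Eventually.of_forall fun n => le_self_add))
    · have h0 : eIndicator Einf (x, y) = ⊤ := by simp [eIndicator, hmem]
      rw [h0, add_top]
      rw [h0] at hI
      exact hI.trans (liminf_le_liminf (Eventually.of_forall fun n => le_add_self))
  -- Upper bound for the limsup version.
  have UB : (⨅ (w : ℕ → X × Y) (_ : Tendsto w atTop (𝓝 (x, y))),
      limsup (fun n => J n (w n) + eIndicator (E n) (w n)) atTop)
        ≤ Jinf (x, y) + eIndicator Einf (x, y) := by
    by_cases hmem : (x, y) ∈ Einf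
    · have h0 : eIndicator Einf (x, y) = 0 := by simp [eIndicator, hmem]
      rw [h0, add_zero]
      refine ENNReal.le_of_forall_pos_le_add fun ε hε hJtop => ?_
      have hεne : (ε : ℝ≥0∞) ≠ 0 := by exact_mod_cast hε.ne'
      have hlt : (⨅ (u : ℕ → X) (_ : Tendsto u atTop (𝓝 x)),
          ⨆ (v : ℕ → Y) (_ : Tendsto v atTop (𝓝 y)),
            limsup (fun n => J n (u n, v n)) atTop) < Jinf (x, y) + ε := by
        rw [hA1 x y]
        exact ENNReal.lt_add_right hJtop.ne hεne
      rw [iInf_lt_iff] at hlt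
      obtain ⟨u, hlt⟩ := hlt
      rw [iInf_lt_iff] at hlt
      obtain ⟨hut, hsup⟩ := hlt
      -- From hB1, the infimum over `v` of the indicator limsups is 0.
      have hle : (⨅ (v : ℕ → Y) (_ : Tendsto v atTop (𝓝 y)),
          limsup (fun n => eIndicator (E n) (u n, v n)) atTop) ≤ 0 := by
        rw [← h0, ← hB1 x y]
        exact le_iSup_of_le u (le_iSup_of_le hut le_rfl)
      have hlt1 : (⨅ (v : ℕ → Y) (_ : Tendsto v atTop (𝓝 y)),
          limsup (fun n => eIndicator (E n) (u n, v n)) atTop) < 1 :=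
        lt_of_le_of_lt hle zero_lt_one
      rw [iInf_lt_iff] at hlt1
      obtain ⟨v, hlt1⟩ := hlt1
      rw [iInf_lt_iff] at hlt1
      obtain ⟨hvt, hv1⟩ := hlt1
      -- The chosen sequence is eventually in `E n`.
      have hev : ∀ᶠ n in atTop, eIndicator (E n) (u n, v n) = 0 := by
        by_contra hcon
        rw [Filter.not_eventually] at hcon
        have : (⊤ : ℝ≥0∞) ≤ limsup (fun n => eIndicator (E n) (u n, v n)) atTop := by
          refine le_limsup_of_frequently_le (hcon.mono fun n hn => ?_)
          by_cases hmemn : (u n, v n) ∈ E n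
          · exact absurd (by simp [eIndicator, hmemn]) hn
          · simp [eIndicator, hmemn]
        exact absurd (lt_of_le_of_lt this hv1) (by simp)
      have hJv : limsup (fun n => J n (u n, v n)) atTop < Jinf (x, y) + ε :=
        lt_of_le_of_lt (le_iSup₂ (f := fun (v : ℕ → Y) (_ : Tendsto v atTop (𝓝 y)) => limsup (fun n => J n (u n, v n)) atTop) v hvt) hsup
      have hwt : Tendsto (fun n => (u n, v n)) atTop (𝓝 (x, y)) := hut.prodMk_nhds hvt
      calc (⨅ (w : ℕ → X × Y) (_ : Tendsto w atTop (𝓝 (x, y))),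
            limsup (fun n => J n (w n) + eIndicator (E n) (w n)) atTop)
          ≤ limsup (fun n => J n (u n, v n) + eIndicator (E n) (u n, v n)) atTop :=
            iInf_le_of_le (fun n => (u n, v n)) (iInf_le_of_le hwt le_rfl)
        _ = limsup (fun n => J n (u n, v n)) atTop :=
            limsup_congr (hev.mono fun n hn => by rw [hn, add_zero])
        _ ≤ Jinf (x, y) + ε := hJv.le
    · have h0 : eIndicator Einf (x, y) = ⊤ := by simp [eIndicator, hmem]
      rw [h0, add_top]
      exact le_top
  have hmono : (⨅ (w : ℕ → X × Y) (_ : Tendsto w atTop (𝓝 (x, y))),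
      liminf (fun n => J n (w n) + eIndicator (E n) (w n)) atTop)
        ≤ (⨅ (w : ℕ → X × Y) (_ : Tendsto w atTop (𝓝 (x, y))),
      limsup (fun n => J n (w n) + eIndicator (E n) (w n)) atTop) :=
    iInf_mono fun w => iInf_mono fun _ => liminf_le_limsup
  exact ⟨le_antisymm (hmono.trans UB) (le_iInf fun w => le_iInf fun hw => LB w hw),
    le_antisymm UB (le_iInf fun w => le_iInf fun hw => (LB w hw).trans liminf_le_limsup)⟩
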